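/- arXiv:0706.0323 — 2 statements merged into one kernel-verified Lean document; each statement's English description precedes it below -/
import Mathlib

section
/- Let χ be a formal power series over ℂ with zero constant term and nonzero linear coefficient (one of the two √z-inverses of a moment series with vanishing mean), and let D be a formal power series over ℂ with nonzero constant term (encoding the S-transform S_y(z) of a variable with nonvanishing mean, via z = X²). Define χ₁(X) = χ(X)·D(X²) and χ̃₁(X) = χ(−X)·D(X²), the χ-series associated to the two product S-transforms S_x·S_y and S̃_x·S_y. Then χ̃₁(X) = χ₁(−X), there exist unique formal power series Ψ and Ψ̃ with zero constant term satisfying Ψ∘χ₁ = X² and Ψ̃∘χ̃₁ = X², and Ψ = Ψ̃. (Proposition 2.3(3): the two candidate S-transforms of the product yield the same moment series ψ_{xy}.) -/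
open PowerSeries

/-- Formal composition `F ∘ G` of power series over `ℂ`, intended for the case where
`G` has zero constant term (so that only finitely many terms contribute to each
coefficient). -/
noncomputable def comp (F G : PowerSeries ℂ) : PowerSeries ℂ :=
  PowerSeries.mk fun n =>
    PowerSeries.coeff n
      (∑ k ∈ Finset.range (n + 1), PowerSeries.C (PowerSeries.coeff k F) * G ^ k)

lemma coeff_comp (F G : PowerSeries ℂ) (n : ℕ) :
    PowerSeries.coeff n (comp F G)
      = ∑ k ∈ Finset.range (n + 1), PowerSeries.coeff k F * PowerSeries.coeff n (G ^ k) := by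
  simp [comp, coeff_mk, map_sum, coeff_C_mul]

lemma coeff_pow_zero_of_lt {G : PowerSeries ℂ} (h : PowerSeries.constantCoeff G = 0)
    {n k : ℕ} (hk : n < k) : PowerSeries.coeff n (G ^ k) = 0 := by
  have hX : (PowerSeries.X : PowerSeries ℂ) ∣ G := PowerSeries.X_dvd_iff.mpr h
  have : (PowerSeries.X : PowerSeries ℂ) ^ k ∣ G ^ k := pow_dvd_pow_of_dvd hX k
  exact (PowerSeries.X_pow_dvd_iff.mp this) n hk

lemma coeff_pow_self {G : PowerSeries ℂ} (h : PowerSeries.constantCoeff G = 0) (n : ℕ) :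
    PowerSeries.coeff n (G ^ n) = (PowerSeries.coeff 1 G) ^ n := by
  obtain ⟨H, rfl⟩ := PowerSeries.X_dvd_iff.mpr h
  have h1 : PowerSeries.coeff 1 (PowerSeries.X * H) = PowerSeries.constantCoeff H := by
    simpa using PowerSeries.coeff_succ_X_mul 0 H
  rw [h1, mul_pow]
  have := PowerSeries.coeff_X_pow_mul (H ^ n) n 0
  simpa [map_pow] using this

lemma comp_rescale (F G : PowerSeries ℂ) (c : ℂ) :
    comp F (PowerSeries.rescale c G) = PowerSeries.rescale c (comp F G) := by
  ext n
  rw [coeff_comp, PowerSeries.coeff_rescale, coeff_comp, Finset.mul_sum]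
  refine Finset.sum_congr rfl fun k _ => ?_
  rw [← map_pow, PowerSeries.coeff_rescale]; ring

lemma comp_inj {G : PowerSeries ℂ} (h0 : PowerSeries.constantCoeff G = 0)
    (h1 : PowerSeries.coeff 1 G ≠ 0) {F F' : PowerSeries ℂ}
    (h : comp F G = comp F' G) : F = F' := by
  ext n
  induction n using Nat.strong_induction_on with
  | _ n ih =>
    have hc := congrArg (PowerSeries.coeff n) h
    rw [coeff_comp, coeff_comp, Finset.sum_range_succ, Finset.sum_range_succ,
      Finset.sum_congr rfl (fun k hk => by
        rw [ih k (Finset.mem_range.mp hk)] :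
        ∀ k ∈ Finset.range n, PowerSeries.coeff k F * PowerSeries.coeff n (G ^ k)
          = PowerSeries.coeff k F' * PowerSeries.coeff n (G ^ k))] at hc
    have := add_left_cancel hc
    rw [coeff_pow_self h0] at this
    exact mul_right_cancel₀ (pow_ne_zero _ h1) this

noncomputable def invC (G : PowerSeries ℂ) : ℕ → ℂ
  | n => ((if n = 2 then (1 : ℂ) else 0)
      - ∑ k ∈ (Finset.range n).attach, invC G k * PowerSeries.coeff n (G ^ (k : ℕ)))
      / (PowerSeries.coeff 1 G) ^ n
  decreasing_by exact Finset.mem_range.mp k.2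

lemma invC_spec {G : PowerSeries ℂ} (h1 : PowerSeries.coeff 1 G ≠ 0) (n : ℕ) :
    invC G n * (PowerSeries.coeff 1 G) ^ n
      = (if n = 2 then (1 : ℂ) else 0)
        - ∑ k ∈ Finset.range n, invC G k * PowerSeries.coeff n (G ^ k) := by
  rw [invC]
  rw [div_mul_cancel₀ _ (pow_ne_zero _ h1)]
  congr 1
  rw [← Finset.sum_attach (Finset.range n) (fun k => invC G k * PowerSeries.coeff n (G ^ k))]

lemma invC_zero {G : PowerSeries ℂ} (h1 : PowerSeries.coeff 1 G ≠ 0) :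
    invC G 0 = 0 := by
  have := invC_spec h1 0
  simpa using this

lemma comp_invC {G : PowerSeries ℂ} (h0 : PowerSeries.constantCoeff G = 0)
    (h1 : PowerSeries.coeff 1 G ≠ 0) :
    comp (PowerSeries.mk (invC G)) G = PowerSeries.X ^ 2 := by
  ext n
  rw [coeff_comp, PowerSeries.coeff_X_pow, Finset.sum_range_succ]
  simp only [PowerSeries.coeff_mk]
  rw [coeff_pow_self h0, invC_spec h1 n]
  ring

lemma rescale_X_sq : PowerSeries.rescale (-1 : ℂ) (PowerSeries.X ^ 2) = PowerSeries.X ^ 2 := by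
  ext n
  rw [PowerSeries.coeff_rescale, PowerSeries.coeff_X_pow]
  split
  · rename_i h; subst h; norm_num
  · ring


/-- Proposition 2.3(3): let `χ` (zero constant term, nonzero linear coefficient) be one
of the two `√z`-inverses of a mean-zero moment series, and let `D` (nonzero constant
term) encode the S-transform `S_y` via `z = X²`. With `χ₁(X) = χ(X)·D(X²)` and
`χ̃₁(X) = χ(−X)·D(X²)` the χ-series of the two product S-transforms `S_x·S_y` and
`S̃_x·S_y`, one has `χ̃₁(X) = χ₁(−X)`, there are unique power series `Ψ`, `Ψ̃` with zero
constant term with `Ψ ∘ χ₁ = X²` and `Ψ̃ ∘ χ̃₁ = X²`, and `Ψ = Ψ̃`: both candidate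
S-transforms of the product give the same moment series `ψ_{xy}`. -/
theorem stmt_8 (χ D χ₁ χt₁ : PowerSeries ℂ)
    (hχ0 : PowerSeries.constantCoeff χ = 0)
    (hχ1 : PowerSeries.coeff 1 χ ≠ 0)
    (hD : PowerSeries.constantCoeff D ≠ 0)
    (hχ₁ : χ₁ = χ * comp D (PowerSeries.X ^ 2))
    (hχt₁ : χt₁ = PowerSeries.rescale (-1 : ℂ) χ * comp D (PowerSeries.X ^ 2)) :
    χt₁ = PowerSeries.rescale (-1 : ℂ) χ₁ ∧
      (∃! Ψ : PowerSeries ℂ, PowerSeries.constantCoeff Ψ = 0 ∧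
        comp Ψ χ₁ = PowerSeries.X ^ 2) ∧
      (∃! Ψt : PowerSeries ℂ, PowerSeries.constantCoeff Ψt = 0 ∧
        comp Ψt χt₁ = PowerSeries.X ^ 2) ∧
      ∀ Ψ Ψt : PowerSeries ℂ,
        PowerSeries.constantCoeff Ψ = 0 → comp Ψ χ₁ = PowerSeries.X ^ 2 →
        PowerSeries.constantCoeff Ψt = 0 → comp Ψt χt₁ = PowerSeries.X ^ 2 →
        Ψ = Ψt := by
  -- constant coefficient of comp D (X^2) is constantCoeff D
  have hcd0 : PowerSeries.constantCoeff (comp D (PowerSeries.X ^ 2))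
      = PowerSeries.constantCoeff D := by
    have := coeff_comp D (PowerSeries.X ^ 2) 0
    simp only [PowerSeries.coeff_zero_eq_constantCoeff] at this ⊢
    rw [this]
    simp
  -- χt₁ = rescale (-1) χ₁
  have hres : χt₁ = PowerSeries.rescale (-1 : ℂ) χ₁ := by
    rw [hχ₁, hχt₁, map_mul, ← comp_rescale, rescale_X_sq]
  -- basic facts about χ₁
  have h0 : PowerSeries.constantCoeff χ₁ = 0 := by
    rw [hχ₁, map_mul, hχ0, zero_mul]
  have h1 : PowerSeries.coeff 1 χ₁ ≠ 0 := by
    have : PowerSeries.coeff 1 χ₁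
        = PowerSeries.coeff 1 χ * PowerSeries.constantCoeff (comp D (PowerSeries.X ^ 2)) := by
      rw [hχ₁, PowerSeries.coeff_mul]
      rw [Finset.Nat.antidiagonal_succ]
      simp [hχ0, PowerSeries.coeff_zero_eq_constantCoeff]
    rw [this, hcd0]
    exact mul_ne_zero hχ1 hD
  have h0t : PowerSeries.constantCoeff χt₁ = 0 := by
    rw [hres]
    have := PowerSeries.coeff_rescale χ₁ (-1 : ℂ) 0
    simp only [PowerSeries.coeff_zero_eq_constantCoeff] at this
    rw [this, h0, mul_zero]
  have h1t : PowerSeries.coeff 1 χt₁ ≠ 0 := by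
    rw [hres, PowerSeries.coeff_rescale]
    simpa using h1
  -- the inverse
  set Ψ₀ : PowerSeries ℂ := PowerSeries.mk (invC χ₁) with hΨ₀
  have hΨ₀0 : PowerSeries.constantCoeff Ψ₀ = 0 := by
    rw [hΨ₀, ← PowerSeries.coeff_zero_eq_constantCoeff, PowerSeries.coeff_mk, invC_zero h1]
  have hΨ₀c : comp Ψ₀ χ₁ = PowerSeries.X ^ 2 := comp_invC h0 h1
  have hΨ₀ct : comp Ψ₀ χt₁ = PowerSeries.X ^ 2 := by
    rw [hres, comp_rescale, hΨ₀c, rescale_X_sq]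
  refine ⟨hres, ⟨Ψ₀, ⟨hΨ₀0, hΨ₀c⟩, fun y hy => comp_inj h0 h1 (hy.2.trans hΨ₀c.symm)⟩,
    ⟨Ψ₀, ⟨hΨ₀0, hΨ₀ct⟩, fun y hy => comp_inj h0t h1t (hy.2.trans hΨ₀ct.symm)⟩,
    fun Ψ Ψt _ hc _ hct => ?_⟩
  have : comp Ψ χt₁ = PowerSeries.X ^ 2 := by
    rw [hres, comp_rescale, hc, rescale_X_sq]
  exact comp_inj h0t h1t (this.trans hct.symm)
end

section
/- Let ψ be a formal power series over ℂ with zero constant term satisfying ψ∘(X·((1+X²)²)⁻¹) = X² (so ψ is the moment series of the free multiplicative convolution of the standard semicircle with the free Poisson distribution, whose χ-series is χ(w) = w/(1+w²)², corresponding to the S-transform 1/(√z·(1+z))). Then M = 1 + ψ satisfies the algebraic equation X²·M⁴ − M + 1 = 0, equivalently ψ = X²·(1+ψ)⁴. (This is the formal power series form of the equation g⁴z² − zg + 1 = 0 for the Cauchy transform of μ ⊠ γ.) -/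
open PowerSeries

namespace CompAux

open Polynomial Finset

lemma coeff_comp_def (F G : PowerSeries ℂ) (n : ℕ) :
    PowerSeries.coeff n (comp F G)
      = PowerSeries.coeff n
          (∑ k ∈ Finset.range (n + 1), PowerSeries.C (PowerSeries.coeff k F) * G ^ k) :=
  PowerSeries.coeff_mk n _

lemma coeff_pow_eq_zero {G : PowerSeries ℂ} (hG : PowerSeries.constantCoeff G = 0)
    {n k : ℕ} (h : n < k) : PowerSeries.coeff n (G ^ k) = 0 := by
  obtain ⟨g, rfl⟩ := PowerSeries.X_dvd_iff.mpr hG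
  rw [mul_pow, PowerSeries.coeff_X_pow_mul', if_neg (not_le.mpr h)]

lemma coeff_eval₂_eq_zero {G : PowerSeries ℂ} (hG : PowerSeries.constantCoeff G = 0)
    {n : ℕ} {P : Polynomial ℂ} (hP : ∀ k ≤ n, P.coeff k = 0) :
    PowerSeries.coeff n (P.eval₂ (PowerSeries.C) G) = 0 := by
  rw [Polynomial.eval₂_eq_sum, Polynomial.sum, map_sum]
  refine Finset.sum_eq_zero fun k _ => ?_
  rcases le_or_gt k n with h | h
  · rw [hP k h]; simp
  · rw [PowerSeries.coeff_C_mul, coeff_pow_eq_zero hG h, mul_zero]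

lemma coeff_eval₂_congr {G : PowerSeries ℂ} (hG : PowerSeries.constantCoeff G = 0)
    {n : ℕ} {P Q : Polynomial ℂ} (h : ∀ k ≤ n, P.coeff k = Q.coeff k) :
    PowerSeries.coeff n (P.eval₂ (PowerSeries.C) G)
      = PowerSeries.coeff n (Q.eval₂ (PowerSeries.C) G) := by
  have hz : PowerSeries.coeff n ((P - Q).eval₂ (PowerSeries.C) G) = 0 :=
    coeff_eval₂_eq_zero hG (fun k hk => by simp [h k hk])
  have : (P - Q).eval₂ (PowerSeries.C) G
      = P.eval₂ (PowerSeries.C) G - Q.eval₂ (PowerSeries.C) G := by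
    simp [sub_eq_add_neg, Polynomial.eval₂_add, Polynomial.eval₂_neg]
  rw [this, map_sub, sub_eq_zero] at hz
  exact hz

lemma coeff_comp (F G : PowerSeries ℂ) (n : ℕ) :
    PowerSeries.coeff n (comp F G)
      = PowerSeries.coeff n ((PowerSeries.trunc (n + 1) F).eval₂ (PowerSeries.C) G) := by
  rw [coeff_comp_def, PowerSeries.eval₂_trunc_eq_sum_range]

lemma coeff_comp' {G : PowerSeries ℂ} (hG : PowerSeries.constantCoeff G = 0)
    (F : PowerSeries ℂ) {m N : ℕ} (h : m < N) :
    PowerSeries.coeff m (comp F G)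
      = PowerSeries.coeff m ((PowerSeries.trunc N F).eval₂ (PowerSeries.C) G) := by
  rw [coeff_comp]
  refine coeff_eval₂_congr hG fun k hk => ?_
  rw [PowerSeries.coeff_trunc, PowerSeries.coeff_trunc,
    if_pos (Nat.lt_succ_of_le hk), if_pos (lt_of_le_of_lt hk h)]

lemma comp_add (F F' G : PowerSeries ℂ) :
    comp (F + F') G = comp F G + comp F' G := by
  ext n
  rw [map_add, coeff_comp_def, coeff_comp_def, coeff_comp_def]
  simp [add_mul, Finset.sum_add_distrib]

lemma comp_sub (F F' G : PowerSeries ℂ) :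
    comp (F - F') G = comp F G - comp F' G := by
  ext n
  rw [map_sub, coeff_comp_def, coeff_comp_def, coeff_comp_def]
  simp [sub_mul, Finset.sum_sub_distrib]

lemma comp_one (G : PowerSeries ℂ) : comp 1 G = 1 := by
  ext n
  rw [coeff_comp_def, Finset.sum_eq_single 0]
  · simp
  · intro k _ hk0; simp [PowerSeries.coeff_one, hk0]
  · intro h; exact absurd (Finset.mem_range.mpr (Nat.succ_pos n)) h

lemma comp_mul {G : PowerSeries ℂ} (hG : PowerSeries.constantCoeff G = 0)
    (F F' : PowerSeries ℂ) :
    comp (F * F') G = comp F G * comp F' G := by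
  ext n
  rw [coeff_comp]
  calc PowerSeries.coeff n ((PowerSeries.trunc (n + 1) (F * F')).eval₂ (PowerSeries.C) G)
      = PowerSeries.coeff n
          ((PowerSeries.trunc (n + 1) F * PowerSeries.trunc (n + 1) F').eval₂
            (PowerSeries.C) G) := by
        refine coeff_eval₂_congr hG fun k hk => ?_
        rw [PowerSeries.coeff_trunc, if_pos (Nat.lt_succ_of_le hk),
          PowerSeries.coeff_mul_eq_coeff_trunc_mul_trunc F F' (Nat.lt_succ_of_le hk),
          ← Polynomial.coe_mul, Polynomial.coeff_coe]
    _ = PowerSeries.coeff n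
          ((PowerSeries.trunc (n + 1) F).eval₂ (PowerSeries.C) G *
            (PowerSeries.trunc (n + 1) F').eval₂ (PowerSeries.C) G) := by
        rw [Polynomial.eval₂_mul]
    _ = PowerSeries.coeff n (comp F G * comp F' G) := by
        rw [PowerSeries.coeff_mul, PowerSeries.coeff_mul]
        refine Finset.sum_congr rfl fun p hp => ?_
        have hpn : p.1 ≤ n ∧ p.2 ≤ n := by
          have := Finset.HasAntidiagonal.mem_antidiagonal.mp hp; omega
        rw [← coeff_comp' hG F (Nat.lt_succ_of_le hpn.1),
          ← coeff_comp' hG F' (Nat.lt_succ_of_le hpn.2)]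

lemma comp_pow {G : PowerSeries ℂ} (hG : PowerSeries.constantCoeff G = 0)
    (F : PowerSeries ℂ) (k : ℕ) :
    comp (F ^ k) G = comp F G ^ k := by
  induction k with
  | zero => simpa using comp_one G
  | succ m ih => rw [pow_succ, comp_mul hG, ih, pow_succ]

lemma comp_X {G : PowerSeries ℂ} (hG : PowerSeries.constantCoeff G = 0) :
    comp PowerSeries.X G = G := by
  ext n
  rw [coeff_comp_def]
  cases n with
  | zero => simpa using hG.symm
  | succ m =>
    rw [Finset.sum_eq_single 1]
    · simp
    · intro k _ hk1; simp [PowerSeries.coeff_X, hk1]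
    · intro h; exact absurd (Finset.mem_range.mpr (by omega)) h

lemma comp_eq_zero_imp {G : PowerSeries ℂ} (hG0 : PowerSeries.constantCoeff G = 0)
    (hG1 : PowerSeries.coeff 1 G ≠ 0) {F : PowerSeries ℂ} (h : comp F G = 0) :
    F = 0 := by
  obtain ⟨g, rfl⟩ := PowerSeries.X_dvd_iff.mpr hG0
  have hg0 : PowerSeries.constantCoeff g ≠ 0 := by
    rwa [PowerSeries.coeff_succ_X_mul 0, PowerSeries.coeff_zero_eq_constantCoeff] at hG1
  ext n
  induction n using Nat.strong_induction_on with
  | _ n ih =>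
    have hc : PowerSeries.coeff n (comp F (PowerSeries.X * g)) = 0 := by
      rw [h, map_zero]
    rw [coeff_comp_def, Finset.sum_range_succ, map_add] at hc
    have hz : PowerSeries.coeff n
        (∑ k ∈ Finset.range n, PowerSeries.C (PowerSeries.coeff k F)
          * (PowerSeries.X * g) ^ k) = 0 := by
      rw [map_sum]
      refine Finset.sum_eq_zero fun k hk => ?_
      have : PowerSeries.coeff k F = 0 := by
        simpa using ih k (Finset.mem_range.mp hk)
      rw [this]; simp
    rw [hz, zero_add, PowerSeries.coeff_C_mul, mul_pow,
      PowerSeries.coeff_X_pow_mul', if_pos le_rfl, Nat.sub_self,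
      PowerSeries.coeff_zero_eq_constantCoeff, map_pow] at hc
    have := mul_eq_zero.mp hc
    simp only [map_zero]
    rcases this with h1 | h1
    · exact h1
    · exact absurd h1 (pow_ne_zero n hg0)

end CompAux

/-- The moment series of the free multiplicative convolution of the standard
semicircle with the free Poisson distribution, whose χ-series is
`χ(w) = w/(1+w²)²` (S-transform `1/(√z(1+z))`), satisfies the algebraic equation
`X²·M⁴ − M + 1 = 0` with `M = 1 + ψ`, equivalently `ψ = X²·(1+ψ)⁴` — the formal
power series form of `g⁴z² − zg + 1 = 0` for the Cauchy transform of `μ ⊠ γ`. -/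
theorem stmt_14 (ψ : PowerSeries ℂ)
    (h0 : PowerSeries.constantCoeff ψ = 0)
    (hχ : comp ψ (PowerSeries.X * ((1 + PowerSeries.X ^ 2) ^ 2)⁻¹)
      = PowerSeries.X ^ 2) :
    PowerSeries.X ^ 2 * (1 + ψ) ^ 4 - (1 + ψ) + 1 = 0 ∧
      ψ = PowerSeries.X ^ 2 * (1 + ψ) ^ 4 := by
  set χ : PowerSeries ℂ := PowerSeries.X * ((1 + PowerSeries.X ^ 2) ^ 2)⁻¹ with hχdef
  have hu : PowerSeries.constantCoeff ((1 + PowerSeries.X ^ 2) ^ 2 : PowerSeries ℂ) = 1 := by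
    simp [pow_two]
  have hG0 : PowerSeries.constantCoeff χ = 0 := by
    simp [hχdef]
  have hG1 : PowerSeries.coeff 1 χ ≠ 0 := by
    rw [hχdef, PowerSeries.coeff_succ_X_mul 0, PowerSeries.coeff_zero_eq_constantCoeff,
      PowerSeries.constantCoeff_inv, hu]
    norm_num
  have hinv : ((1 + PowerSeries.X ^ 2) ^ 2 : PowerSeries ℂ)
      * ((1 + PowerSeries.X ^ 2) ^ 2)⁻¹ = 1 :=
    PowerSeries.mul_inv_cancel _ (by rw [hu]; norm_num)
  have hcompRHS : comp (PowerSeries.X ^ 2 * (1 + ψ) ^ 4) χ = PowerSeries.X ^ 2 := by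
    rw [CompAux.comp_mul hG0, CompAux.comp_pow hG0, CompAux.comp_pow hG0,
      CompAux.comp_X hG0, CompAux.comp_add, CompAux.comp_one, hχ]
    have hre : χ ^ 2 * (1 + PowerSeries.X ^ 2) ^ 4
        = PowerSeries.X ^ 2 * ((1 + PowerSeries.X ^ 2) ^ 2 * ((1 + PowerSeries.X ^ 2) ^ 2)⁻¹) ^ 2 := by
      rw [hχdef]; ring
    rw [hre, hinv, one_pow, mul_one]
  have hdiff : comp (ψ - PowerSeries.X ^ 2 * (1 + ψ) ^ 4) χ = 0 := by
    rw [CompAux.comp_sub, hχ, hcompRHS, sub_self]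
  have hψ : ψ = PowerSeries.X ^ 2 * (1 + ψ) ^ 4 := by
    have := CompAux.comp_eq_zero_imp hG0 hG1 hdiff
    linear_combination this
  refine ⟨?_, hψ⟩
  rw [← hψ]; ring
end
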